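/- Let G be a (finite or countable) simple graph of maximal degree k+1, and let v be a vertex of G. Then for every n ≥ 1 the number of connected subgraphs of G with exactly n edges containing the vertex v is at most (k+1)^{2n}. -/

import Mathlib

open Classical SimpleGraph

/-- `G` is a Cayley tree with branching number `k`: an infinite connected acyclic
simple graph in which every vertex has exactly `k + 1` neighbors. -/
structure IsCayleyTree {V : Type*} (G : SimpleGraph V) (k : ℕ) : Prop where
  infinite : Infinite V
  connected : G.Connected
  acyclic : G.IsAcyclic
  degree : ∀ v : V, (G.neighborSet v).ncard = k + 1

/-- A spin configuration takes values in `{-1, +1}`. -/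
def IsSpin {V : Type*} (σ : V → ℤ) : Prop := ∀ v, σ v = 1 ∨ σ v = -1

/-- `σ` is frustrated exactly on the edges of `D`: for every edge `{x,y}` of `G`,
`σ x * σ y = -1` if `{x,y} ∈ D` and `σ x * σ y = 1` otherwise. -/
def SatisfiesD {V : Type*} (G : SimpleGraph V) (D : Set (Sym2 V)) (σ : V → ℤ) : Prop :=
  ∀ x y : V, G.Adj x y →
    (s(x, y) ∈ D → σ x * σ y = -1) ∧ (s(x, y) ∉ D → σ x * σ y = 1)

/-- The excess energy `H(σ) - H(σbase) = J * Σ_{{x,y} ∈ E} (σbase x * σbase y - σ x * σ y)`,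
a sum with finitely many nonzero terms when `σ` and `σbase` differ at finitely many sites. -/
noncomputable def excessEnergy {V : Type*} (G : SimpleGraph V) (J : ℝ) (σ σbase : V → ℤ) : ℝ :=
  J * ∑ᶠ e ∈ G.edgeSet,
      ((Sym2.lift ⟨fun x y => σbase x * σbase y - σ x * σ y, fun _ _ => by ring⟩ e : ℤ) : ℝ)

/-- The configuration obtained from `σ` by flipping all spins in `C`. -/
noncomputable def flipSpins {V : Type*} (σ : V → ℤ) (C : Set V) : V → ℤ :=
  fun v => if v ∈ C then -σ v else σ v

/-- The number `d_D(v)` of edges of `D` incident to the vertex `v`. -/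
noncomputable def incidentCount {V : Type*} (D : Set (Sym2 V)) (v : V) : ℕ :=
  {e ∈ D | v ∈ e}.ncard

/-- A set of vertices is connected if any two of its vertices are joined by a
walk staying within the set. -/
def SetConnected {V : Type*} (G : SimpleGraph V) (S : Set V) : Prop :=
  ∀ x ∈ S, ∀ y ∈ S, ∃ p : G.Walk x y, ∀ z ∈ p.support, z ∈ S


/-- Edges of `G` both of whose endpoints are reachable from `u`. -/
private def reachEdges {V : Type*} (G : SimpleGraph V) (u : V) : Set (Sym2 V) :=
  {e | e ∈ G.edgeSet ∧ ∀ x ∈ e, G.Reachable u x}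

private lemma reach_del_of_reach {V : Type*} {G : SimpleGraph V} {u b : V}
    (hr : (G.deleteEdges {s(u, b)}).Reachable u b) {x y : V} (h : G.Reachable x y) :
    (G.deleteEdges {s(u, b)}).Reachable x y := by
  obtain ⟨w⟩ := h
  induction w with
  | nil => exact Reachable.refl _
  | @cons a c d h' p ih =>
    refine Reachable.trans ?_ ih
    by_cases he : s(a, c) = s(u, b)
    · rw [Sym2.eq_iff] at he
      rcases he with ⟨rfl, rfl⟩ | ⟨rfl, rfl⟩
      · exact hr
      · exact hr.symm
    · exact Adj.reachable (by rw [deleteEdges_adj]; exact ⟨h', by simpa using he⟩)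

private lemma reach_del_split {V : Type*} {G : SimpleGraph V} {u b : V} {x y : V}
    (w : G.Walk x y) :
    (G.deleteEdges {s(u, b)}).Reachable x y ∨
      ((G.deleteEdges {s(u, b)}).Reachable x u ∧ (G.deleteEdges {s(u, b)}).Reachable b y) ∨
      ((G.deleteEdges {s(u, b)}).Reachable x b ∧ (G.deleteEdges {s(u, b)}).Reachable u y) := by
  set G'' := G.deleteEdges {s(u, b)} with hG''
  induction w with
  | nil => exact Or.inl (Reachable.refl _)
  | @cons a c d h' p ih =>
    by_cases he : s(a, c) = s(u, b)
    · rw [Sym2.eq_iff] at he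
      rcases he with ⟨rfl, rfl⟩ | ⟨rfl, rfl⟩
      · -- a = u, c = b
        rcases ih with h1 | ⟨h1, h2⟩ | ⟨h1, h2⟩
        · exact Or.inr (Or.inl ⟨Reachable.refl _, h1⟩)
        · exact Or.inl (h1.symm.trans h2)
        · exact Or.inl h2
      · -- a = b, c = u
        rcases ih with h1 | ⟨h1, h2⟩ | ⟨h1, h2⟩
        · exact Or.inr (Or.inr ⟨Reachable.refl _, h1⟩)
        · exact Or.inl h2
        · exact Or.inl (h1.symm.trans h2)
    · have hac : G''.Reachable a c :=
        Adj.reachable (by rw [hG'', deleteEdges_adj]; exact ⟨h', by simpa using he⟩)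
      rcases ih with h1 | ⟨h1, h2⟩ | ⟨h1, h2⟩
      · exact Or.inl (hac.trans h1)
      · exact Or.inr (Or.inl ⟨hac.trans h1, h2⟩)
      · exact Or.inr (Or.inr ⟨hac.trans h1, h2⟩)

private lemma edges_mapLe' {V : Type*} {G G' : SimpleGraph V} (h : G ≤ G') {u v : V}
    (p : G.Walk u v) : (p.mapLe h).edges = p.edges := by
  induction p with
  | nil => rfl
  | cons h' p ih => simp only [Walk.mapLe, Walk.map_cons, Walk.edges_cons] at *; rw [ih]; rfl

private lemma euler_walk {V : Type*} :
    ∀ (n : ℕ) (G : SimpleGraph V) (u : V), (reachEdges G u).Finite →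
      (reachEdges G u).ncard = n →
      ∃ p : G.Walk u u, p.length = 2 * n ∧ ∀ e ∈ reachEdges G u, e ∈ p.edges := by
  intro n
  induction n using Nat.strong_induction_on with
  | _ n ih =>
  intro G u hfin hcard
  rcases Nat.eq_zero_or_pos n with rfl | hpos
  · refine ⟨Walk.nil, by simp, ?_⟩
    have : reachEdges G u = ∅ := (Set.ncard_eq_zero hfin).1 hcard
    simp [this]
  · -- get a neighbor of u
    have hne : (reachEdges G u).Nonempty :=
      Set.nonempty_of_ncard_ne_zero (by rw [hcard]; omega)
    have hDadj : ∃ b, G.Adj u b := by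
      by_contra hno
      push_neg at hno
      have hru : ∀ x : V, G.Reachable u x → x = u := by
        intro x hx
        obtain ⟨w⟩ := hx
        cases w with
        | nil => rfl
        | cons h' p => exact absurd h' (hno _)
      obtain ⟨e, heE, hre⟩ := hne
      induction e using Sym2.ind with
      | _ a c =>
        have hac : G.Adj a c := heE
        have ha := hru a (hre a (by simp))
        have hc := hru c (hre c (by simp))
        rw [ha, hc] at hac
        exact G.loopless.irrefl _ hac
    obtain ⟨b, hub⟩ := hDadj
    set G'' := G.deleteEdges {s(u, b)} with hG''def
    have hle : G'' ≤ G := deleteEdges_le _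
    have hedge'' : G''.edgeSet = G.edgeSet \ {s(u, b)} := edgeSet_deleteEdges _
    have heE : s(u, b) ∈ reachEdges G u := by
      refine ⟨hub, ?_⟩
      intro x hx
      rw [Sym2.mem_iff] at hx
      rcases hx with rfl | rfl
      · exact Reachable.refl _
      · exact hub.reachable
    by_cases hr : G''.Reachable u b
    · -- still connected
      have hEeq : reachEdges G'' u = reachEdges G u \ {s(u, b)} := by
        ext e
        constructor
        · rintro ⟨hes, hre⟩
          have hes' := hedge'' ▸ hes
          exact ⟨⟨hes'.1, fun x hx => (hre x hx).mono hle⟩, hes'.2⟩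
        · rintro ⟨⟨hes, hre⟩, hne'⟩
          exact ⟨hedge'' ▸ ⟨hes, hne'⟩, fun x hx => reach_del_of_reach hr (hre x hx)⟩
      have hfin'' : (reachEdges G'' u).Finite := hfin.subset (by rw [hEeq]; exact Set.diff_subset)
      have hcard'' : (reachEdges G'' u).ncard = n - 1 := by
        rw [hEeq, Set.ncard_diff_singleton_of_mem heE, hcard]
      obtain ⟨w, hwlen, hwcov⟩ := ih (n - 1) (by omega) G'' u hfin'' hcard''
      refine ⟨.cons hub (.cons hub.symm (w.mapLe hle)), ?_, ?_⟩
      · simp only [Walk.length_cons, Walk.length_map, hwlen]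
        omega
      · intro e he
        by_cases heq : e = s(u, b)
        · subst heq; simp [Walk.edges_cons]
        · have he'' : e ∈ reachEdges G'' u := hEeq ▸ ⟨he, heq⟩
          have := hwcov e he''
          simp only [Walk.edges_cons, List.mem_cons, edges_mapLe']
          tauto
    · -- disconnected
      have hsub1 : reachEdges G'' u ⊆ reachEdges G u := by
        rintro e ⟨hes, hre⟩
        exact ⟨(hedge'' ▸ hes).1, fun x hx => (hre x hx).mono hle⟩
      have hsub2 : reachEdges G'' b ⊆ reachEdges G u := by
        rintro e ⟨hes, hre⟩
        exact ⟨(hedge'' ▸ hes).1, fun x hx => hub.reachable.trans ((hre x hx).mono hle)⟩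
      have hdisj : Disjoint (reachEdges G'' u) (reachEdges G'' b) := by
        rw [Set.disjoint_left]
        rintro e ⟨hes, hreu⟩ ⟨-, hreb⟩
        induction e using Sym2.ind with
        | _ x y =>
          exact hr ((hreu x (by simp)).trans (hreb x (by simp)).symm)
      have hunion : reachEdges G u \ {s(u, b)} = reachEdges G'' u ∪ reachEdges G'' b := by
        apply Set.Subset.antisymm
        · rintro e ⟨⟨hes, hre⟩, hne'⟩
          induction e using Sym2.ind with
          | _ x y =>
            have hxy'' : G''.Adj x y := by
              rw [hG''def, deleteEdges_adj]
              exact ⟨hes, by simpa using hne'⟩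
            have hrx : G.Reachable u x := hre x (by simp)
            obtain ⟨wx⟩ := hrx
            rcases reach_del_split (u := u) (b := b) wx with h1 | ⟨h1, h2⟩ | ⟨h1, h2⟩
            · refine Or.inl ⟨hxy'', ?_⟩
              intro z hz
              rw [Sym2.mem_iff] at hz
              rcases hz with rfl | rfl
              · exact h1
              · exact h1.trans hxy''.reachable
            · refine Or.inr ⟨hxy'', ?_⟩
              intro z hz
              rw [Sym2.mem_iff] at hz
              rcases hz with rfl | rfl
              · exact h2
              · exact h2.trans hxy''.reachable
            · exact absurd h1 hr
        · rintro e (he | he)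
          · refine ⟨hsub1 he, ?_⟩
            have : e ∈ G''.edgeSet := he.1
            rw [hedge''] at this
            simpa using this.2
          · refine ⟨hsub2 he, ?_⟩
            have : e ∈ G''.edgeSet := he.1
            rw [hedge''] at this
            simpa using this.2
      have hf1 : (reachEdges G'' u).Finite := hfin.subset hsub1
      have hf2 : (reachEdges G'' b).Finite := hfin.subset hsub2
      have hsum : (reachEdges G'' u).ncard + (reachEdges G'' b).ncard = n - 1 := by
        rw [← Set.ncard_union_eq hdisj hf1 hf2, ← hunion,
          Set.ncard_diff_singleton_of_mem heE, hcard]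
      obtain ⟨wu, hwulen, hwucov⟩ :=
        ih (reachEdges G'' u).ncard (by omega) G'' u hf1 rfl
      obtain ⟨wb, hwblen, hwbcov⟩ :=
        ih (reachEdges G'' b).ncard (by omega) G'' b hf2 rfl
      refine ⟨.cons hub ((wb.mapLe hle).append (.cons hub.symm (wu.mapLe hle))), ?_, ?_⟩
      · simp only [Walk.length_cons, Walk.length_append, Walk.length_map, hwulen, hwblen]
        omega
      · intro e he
        by_cases heq : e = s(u, b)
        · subst heq; simp [Walk.edges_cons]
        · have he' : e ∈ reachEdges G'' u ∪ reachEdges G'' b := hunion ▸ ⟨he, heq⟩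
          simp only [Walk.edges_cons, Walk.edges_append, List.mem_cons, List.mem_append,
            edges_mapLe']
          rcases he' with h | h
          · exact Or.inr (Or.inr (Or.inr (hwucov e h)))
          · exact Or.inr (Or.inl (hwbcov e h))


private lemma spanningCoe_edgeSet {V : Type*} {G : SimpleGraph V} (H : G.Subgraph) :
    H.spanningCoe.edgeSet = H.edgeSet := by
  ext e
  induction e using Sym2.ind with
  | _ x y => simp [mem_edgeSet, Subgraph.mem_edgeSet]

private lemma reachEdges_spanningCoe {V : Type*} {G : SimpleGraph V} {H : G.Subgraph} {v : V}
    (hc : H.Connected) (hv : v ∈ H.verts) :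
    reachEdges H.spanningCoe v = H.edgeSet := by
  have hreach : ∀ x ∈ H.verts, H.spanningCoe.Reachable v x := by
    intro x hx
    exact Reachable.map (⟨Subtype.val, fun {a b} h => h⟩ : H.coe →g H.spanningCoe)
      (hc ⟨v, hv⟩ ⟨x, hx⟩)
  ext e
  constructor
  · rintro ⟨hes, -⟩
    exact (spanningCoe_edgeSet H) ▸ hes
  · intro he
    refine ⟨(spanningCoe_edgeSet H) ▸ he, ?_⟩
    induction e using Sym2.ind with
    | _ x y =>
      have hadj : H.Adj x y := (Subgraph.mem_edgeSet).1 he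
      intro z hz
      rw [Sym2.mem_iff] at hz
      rcases hz with rfl | rfl
      · exact hreach z (H.edge_vert hadj)
      · exact hreach z (H.edge_vert hadj.symm)

private lemma subgraph_verts_eq {V : Type*} {G : SimpleGraph V} {H : G.Subgraph}
    (hc : H.Connected) (hne : H.edgeSet.Nonempty) :
    H.verts = {x | ∃ y, H.Adj x y} := by
  ext x
  constructor
  · intro hx
    obtain ⟨e, he⟩ := hne
    induction e using Sym2.ind with
    | _ a c =>
      have hac : H.Adj a c := (Subgraph.mem_edgeSet).1 he
      have ha : a ∈ H.verts := H.edge_vert hac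
      obtain ⟨w⟩ := hc ⟨x, hx⟩ ⟨a, ha⟩
      cases w with
      | nil => exact ⟨c, by simpa using hac⟩
      | @cons _ z _ h' p => exact ⟨z.1, h'⟩
  · rintro ⟨y, hy⟩
    exact H.edge_vert hy

private lemma subgraph_eq_of_edgeSet_eq {V : Type*} {G : SimpleGraph V} {H₁ H₂ : G.Subgraph}
    (h₁ : H₁.Connected) (h₂ : H₂.Connected) (hne₁ : H₁.edgeSet.Nonempty)
    (he : H₁.edgeSet = H₂.edgeSet) : H₁ = H₂ := by
  have hAdj : H₁.Adj = H₂.Adj := by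
    funext x y
    rw [eq_iff_iff, ← Subgraph.mem_edgeSet, ← Subgraph.mem_edgeSet, he]
  have hne₂ : H₂.edgeSet.Nonempty := he ▸ hne₁
  refine Subgraph.ext ?_ hAdj
  rw [subgraph_verts_eq h₁ hne₁, subgraph_verts_eq h₂ hne₂, hAdj]

private lemma ncard_biUnion_le'' {α β : Type*} {t : α → Set β} {m : ℕ} :
    ∀ {s : Set α}, s.Finite → (∀ a ∈ s, (t a).Finite) → (∀ a ∈ s, (t a).ncard ≤ m) →
    (⋃ a ∈ s, t a).ncard ≤ s.ncard * m := by
  intro s hs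
  refine Set.Finite.induction_on (motive := fun s _ => (∀ a ∈ s, (t a).Finite) → (∀ a ∈ s, (t a).ncard ≤ m) →
    (⋃ a ∈ s, t a).ncard ≤ s.ncard * m) s hs (fun _ _ => by simp) ?_
  intro a s' hans hs' ih hfin hm
  rw [Set.biUnion_insert]
  calc (t a ∪ ⋃ x ∈ s', t x).ncard ≤ (t a).ncard + (⋃ x ∈ s', t x).ncard :=
        Set.ncard_union_le _ _
    _ ≤ m + s'.ncard * m := by
        refine add_le_add (hm a (Set.mem_insert _ _)) (ih ?_ ?_)
        · exact fun b hb => hfin b (Set.mem_insert_of_mem _ hb)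
        · exact fun b hb => hm b (Set.mem_insert_of_mem _ hb)
    _ = (insert a s').ncard * m := by
        rw [Set.ncard_insert_of_notMem hans hs']; ring

private lemma walk_count_aux {V : Type*} (G : SimpleGraph V) (k : ℕ)
    (hdeg : ∀ w : V, (G.neighborSet w).Finite ∧ (G.neighborSet w).ncard ≤ k + 1) :
    ∀ (L : ℕ) (u : V), {q : Σ w : V, G.Walk u w | q.2.length = L}.Finite ∧
      {q : Σ w : V, G.Walk u w | q.2.length = L}.ncard ≤ (k + 1) ^ L := by
  intro L
  induction L with
  | zero =>
    intro u
    have hsub : {q : Σ w : V, G.Walk u w | q.2.length = 0} ⊆ {⟨u, Walk.nil⟩} := by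
      rintro ⟨w, p⟩ hp
      cases p with
      | nil => rfl
      | cons h p' => simp [Set.mem_setOf_eq] at hp
    constructor
    · exact (Set.finite_singleton _).subset hsub
    · simpa using Set.ncard_le_ncard hsub (Set.finite_singleton _)
  | succ L ih =>
    intro u
    set g : ∀ _ : V, (Σ w : V, G.Walk _ w) → (Σ w : V, G.Walk u w) := fun b q =>
      if h : G.Adj u b then ⟨q.1, Walk.cons h q.2⟩ else ⟨u, Walk.nil⟩ with hg
    have hsub : {q : Σ w : V, G.Walk u w | q.2.length = L + 1} ⊆
        ⋃ b ∈ G.neighborSet u, g b '' {q : Σ w : V, G.Walk b w | q.2.length = L} := by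
      rintro ⟨w, p⟩ hp
      simp only [Set.mem_setOf_eq] at hp
      cases p with
      | nil => simp at hp
      | @cons _ b _ h p' =>
        refine Set.mem_biUnion (G.mem_neighborSet u b |>.2 h) ?_
        refine ⟨⟨w, p'⟩, by simpa using hp, ?_⟩
        simp only [hg, dif_pos h]
    have hfinU : (⋃ b ∈ G.neighborSet u, g b '' {q : Σ w : V, G.Walk b w | q.2.length = L}).Finite :=
      Set.Finite.biUnion (hdeg u).1 (fun b _ => ((ih b).1).image _)
    refine ⟨hfinU.subset hsub, ?_⟩
    calc {q : Σ w : V, G.Walk u w | q.2.length = L + 1}.ncard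
        ≤ _ := Set.ncard_le_ncard hsub hfinU
      _ ≤ (G.neighborSet u).ncard * (k + 1) ^ L := by
          refine ncard_biUnion_le'' (hdeg u).1 (fun b _ => ((ih b).1).image _) ?_
          exact fun b _ => le_trans (Set.ncard_image_le (ih b).1) (ih b).2
      _ ≤ (k + 1) * (k + 1) ^ L := Nat.mul_le_mul_right _ (hdeg u).2
      _ = (k + 1) ^ (L + 1) := by rw [pow_succ]; ring

/-- In a (finite or countable) simple graph of maximal degree `k+1`, for
every `n ≥ 1` the number of connected subgraphs with exactly `n` edges containing a
given vertex `v` is at most `(k+1)^{2n}`. -/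
theorem connected_subgraph_count {V : Type*} [Countable V] (G : SimpleGraph V) (k : ℕ)
    (hdeg : ∀ v : V, (G.neighborSet v).Finite ∧ (G.neighborSet v).ncard ≤ k + 1)
    (v : V) (n : ℕ) (hn : 1 ≤ n) :
    {H : G.Subgraph | H.Connected ∧ v ∈ H.verts ∧ H.edgeSet.Finite
        ∧ H.edgeSet.ncard = n}.Finite
      ∧ {H : G.Subgraph | H.Connected ∧ v ∈ H.verts ∧ H.edgeSet.Finite
        ∧ H.edgeSet.ncard = n}.ncard ≤ (k + 1) ^ (2 * n) := by
  set S := {H : G.Subgraph | H.Connected ∧ v ∈ H.verts ∧ H.edgeSet.Finite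
    ∧ H.edgeSet.ncard = n} with hS
  have hex : ∀ H ∈ S, ∃ p : G.Walk v v, p.length = 2 * n ∧
      ∀ e, e ∈ H.edgeSet ↔ e ∈ p.edges := by
    rintro H ⟨hc, hv, hfinE, hcardE⟩
    have hre : reachEdges H.spanningCoe v = H.edgeSet := reachEdges_spanningCoe hc hv
    obtain ⟨p', hlen, hcov⟩ := euler_walk n H.spanningCoe v (hre ▸ hfinE) (by rw [hre, hcardE])
    refine ⟨p'.mapLe H.spanningCoe_le, ?_, ?_⟩
    · simpa [Walk.mapLe, Walk.length_map] using hlen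
    · intro e
      constructor
      · intro he
        rw [edges_mapLe']
        exact hcov e (hre ▸ he)
      · intro he
        rw [edges_mapLe'] at he
        have := p'.edges_subset_edgeSet he
        exact (spanningCoe_edgeSet H) ▸ this
  set f : G.Subgraph → G.Walk v v := fun H =>
    if h : H ∈ S then (hex H h).choose else Walk.nil with hfdef
  have hf : ∀ H ∈ S, (f H).length = 2 * n ∧ ∀ e, e ∈ H.edgeSet ↔ e ∈ (f H).edges := by
    intro H h
    simp only [hfdef, dif_pos h]
    exact (hex H h).choose_spec
  have hinj : Set.InjOn f S := by
    intro H₁ h₁ H₂ h₂ heq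
    have e1 := (hf H₁ h₁).2
    have e2 := (hf H₂ h₂).2
    have hE : H₁.edgeSet = H₂.edgeSet := by
      ext e
      rw [e1 e, heq, ← e2 e]
    have hne : H₁.edgeSet.Nonempty :=
      Set.nonempty_of_ncard_ne_zero (by rw [h₁.2.2.2]; omega)
    exact subgraph_eq_of_edgeSet_eq h₁.1 h₂.1 hne hE
  set W : Set (G.Walk v v) := {p | p.length = 2 * n} with hW
  have himg : f '' S ⊆ W := by
    rintro _ ⟨H, hH, rfl⟩
    exact (hf H hH).1
  obtain ⟨hWfin', hWcard'⟩ := walk_count_aux G k hdeg (2 * n) v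
  set g : G.Walk v v → (Σ w : V, G.Walk v w) := fun p => ⟨v, p⟩ with hg
  have hginj : Function.Injective g := by
    intro p q h
    simpa [hg] using h
  have hgim : g '' W ⊆ {q : Σ w : V, G.Walk v w | q.2.length = 2 * n} := by
    rintro _ ⟨p, hp, rfl⟩
    exact hp
  have hWfin : W.Finite := Set.Finite.of_finite_image (hWfin'.subset hgim) hginj.injOn
  have hWcard : W.ncard ≤ (k + 1) ^ (2 * n) := by
    calc W.ncard = (g '' W).ncard := (Set.ncard_image_of_injective W hginj).symm
      _ ≤ _ := Set.ncard_le_ncard hgim hWfin'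
      _ ≤ (k + 1) ^ (2 * n) := hWcard'
  have hSfin : S.Finite := Set.Finite.of_finite_image (hWfin.subset himg) hinj
  refine ⟨hSfin, ?_⟩
  calc S.ncard = (f '' S).ncard := (Set.ncard_image_of_injOn hinj).symm
    _ ≤ W.ncard := Set.ncard_le_ncard himg hWfin
    _ ≤ _ := hWcard
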